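/- In an IDF algebra, |x| is the largest duplicable state below x: that is, |x| = |x| ⊕ |x|, x ⪰ |x|, and for every c with c = c ⊕ c and x ⪰ c, we have |x| ⪰ c. -/
import Mathlib


/-- An IDF algebra: a partial commutative monoid with core, stability predicate
and stabilization, satisfying the axioms of Dardinier et al.
Partiality of `⊕` is modeled via `Option`; `op a b = some c` asserts that
`a ⊕ b` is defined and equals `c`. -/
structure IDF (α : Type) where
  op : α → α → Option α
  core : α → α
  stable : α → Prop
  stabilize : α → α
  comm : ∀ a b, op a b = op b a
  assoc : ∀ a b c, (op a b).bind (fun x => op x c) = (op b c).bind (fun y => op a y)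
  positivity : ∀ a b c, op a b = some c → op c c = some c → op a a = some a
  core_self : ∀ x, op x (core x) = some x
  core_dup : ∀ x, op (core x) (core x) = some (core x)
  core_max : ∀ x c, op x c = some x → ∃ r, op c r = some (core x)
  core_add : ∀ a b c, op a b = some c → op (core a) (core b) = some (core c)
  cancel : ∀ x a b w, op x a = some w → op x b = some w → core a = core b → a = b
  stable_stabilize : ∀ ω, stable ω → stabilize ω = ω
  stabilize_stable : ∀ ω, stable (stabilize ω)
  stabilize_add : ∀ a b c, op a b = some c → op (stabilize a) (stabilize b) = some (stabilize c)
  stabilize_core : ∀ x, op (stabilize x) (core x) = some x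
  stabilize_core_unit : ∀ a b c, op b (stabilize (core c)) = some a → a = b

namespace IDF

variable {α : Type}

/-- `Alg.ge x y` means `x ⪰ y`, i.e. `∃ r, x = y ⊕ r`. -/
def ge (Alg : IDF α) (x y : α) : Prop := ∃ r, Alg.op y r = some x

/-- Separating conjunction of (semantic) assertions. -/
def star (Alg : IDF α) (P Q : Set α) : Set α :=
  {ω | ∃ p ∈ P, ∃ q ∈ Q, Alg.op p q = some ω}

/-- `P` is self-framing. -/
def selfFraming (Alg : IDF α) (P : Set α) : Prop :=
  ∀ ω, ω ∈ P ↔ Alg.stabilize ω ∈ P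

/-- The state `ω` frames the assertion `P`. -/
def framesState (Alg : IDF α) (ω : α) (P : Set α) : Prop :=
  Alg.selfFraming (Alg.star {ω} P)

/-- The assertion `B` frames the assertion `P`: every stable state of `B` frames `P`. -/
def framesAssert (Alg : IDF α) (B P : Set α) : Prop :=
  ∀ ω ∈ B, Alg.stable ω → Alg.framesState ω P

end IDF

/-- `|x|` is the largest duplicable state below `x`. -/
theorem idf_core_largest_duplicable {α : Type} (Alg : IDF α) (x : α) :
    Alg.op (Alg.core x) (Alg.core x) = some (Alg.core x) ∧
    Alg.ge x (Alg.core x) ∧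
    (∀ c, Alg.op c c = some c → Alg.ge x c → Alg.ge (Alg.core x) c) := by
  refine ⟨Alg.core_dup x, ⟨x, (Alg.comm _ _).trans (Alg.core_self x)⟩, ?_⟩
  rintro c hdup ⟨r, hr⟩
  have h := Alg.assoc c c r
  rw [hdup, hr] at h
  simp only [Option.bind_some] at h
  -- h : Alg.op c r = Alg.op c x
  have hcx : Alg.op x c = some x := (Alg.comm x c).trans (h ▸ hr)
  exact Alg.core_max x c hcx
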